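/- arXiv:2404.18226 — 3 statements merged into one kernel-verified Lean document; each statement's English description precedes it below -/
import Mathlib

section
/- Birkhoff–von Neumann theorem: every doubly stochastic matrix is a convex combination of permutation matrices. -/
theorem birkhoff_von_neumann {n : ℕ} (S : Matrix (Fin n) (Fin n) ℝ)
    (hpos : ∀ i j, 0 ≤ S i j)
    (hrow : ∀ i, ∑ j, S i j = 1)
    (hcol : ∀ j, ∑ i, S i j = 1) :
    ∃ (k : ℕ) (w : Fin k → ℝ) (P : Fin k → Matrix (Fin n) (Fin n) ℝ),
      (∀ i, 0 ≤ w i) ∧ (∑ i, w i = 1) ∧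
      (∀ i, ∃ σ : Equiv.Perm (Fin n), ∀ a b, P i a b = if σ b = a then 1 else 0) ∧
      S = ∑ i, w i • P i := by
  have hS : S ∈ doublyStochastic ℝ (Fin n) :=
    mem_doublyStochastic_iff_sum.mpr ⟨hpos, hrow, hcol⟩
  obtain ⟨w, hw0, hw1, hwS⟩ := exists_eq_sum_perm_of_mem_doublyStochastic hS
  let e := Fintype.equivFin (Equiv.Perm (Fin n))
  refine ⟨Fintype.card (Equiv.Perm (Fin n)), fun i => w (e.symm i),
    fun i => (e.symm i).permMatrix ℝ, fun i => hw0 _, ?_, ?_, ?_⟩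
  · rw [← hw1]; exact (Fintype.sum_equiv e _ _ (fun σ => by simp)).symm
  · intro i
    refine ⟨(e.symm i)⁻¹, fun a b => ?_⟩
    simp only [Equiv.Perm.permMatrix, PEquiv.toMatrix_apply, Equiv.toPEquiv_apply,
      Option.mem_def, Option.some.injEq]
    simp [Equiv.Perm.eq_inv_iff_eq, eq_comm]
    exact if_congr (eq_comm.trans (Equiv.eq_symm_apply _).symm) rfl rfl
  · rw [← hwS]; exact Fintype.sum_equiv e _ _ (fun σ => by simp)
end

section
/- If S is doubly stochastic and nonzero in the sense that not all weight has been extracted (i.e., its row sums equal r > 0), then S has a positive diagonal: there exists a permutation σ with S i (σ i) > 0 for all i. (König/Frobenius step used in Birkhoff's algorithm.) -/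
theorem scaled_doubly_stochastic_has_positive_diagonal {n : ℕ}
    (S : Matrix (Fin n) (Fin n) ℝ) (r : ℝ) (hr : 0 < r)
    (hpos : ∀ i j, 0 ≤ S i j)
    (hrow : ∀ i, ∑ j, S i j = r)
    (hcol : ∀ j, ∑ i, S i j = r) :
    ∃ σ : Equiv.Perm (Fin n), ∀ i, 0 < S i (σ i) := by
  set M : Matrix (Fin n) (Fin n) ℝ := r⁻¹ • S with hM
  have hMds : M ∈ doublyStochastic ℝ (Fin n) := by
    rw [mem_doublyStochastic_iff_sum]
    refine ⟨fun i j => by simpa [hM, Matrix.smul_apply] using mul_nonneg (inv_nonneg.2 hr.le) (hpos i j), fun i => ?_, fun j => ?_⟩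
    · simp [hM, Matrix.smul_apply, ← Finset.mul_sum, hrow, inv_mul_cancel₀ hr.ne']
    · simp [hM, Matrix.smul_apply, ← Finset.mul_sum, hcol, inv_mul_cancel₀ hr.ne']
  obtain ⟨w, hw0, hw1, hwM⟩ := exists_eq_sum_perm_of_mem_doublyStochastic hMds
  have : ∃ σ, 0 < w σ := by
    by_contra h
    push_neg at h
    have : ∑ σ : Equiv.Perm (Fin n), w σ = 0 :=
      Finset.sum_eq_zero fun σ _ => le_antisymm (h σ) (hw0 σ)
    simp [this] at hw1
  obtain ⟨σ, hσ⟩ := this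
  refine ⟨σ, fun i => ?_⟩
  have hMpos : 0 < M i (σ i) := by
    have := congrFun (congrFun hwM i) (σ i)
    rw [← this]
    have h1 : (w σ • σ.permMatrix ℝ) i (σ i) = w σ := by
      simp [Equiv.Perm.permMatrix, Matrix.smul_apply, Equiv.toPEquiv_apply]
    calc 0 < w σ := hσ
    _ = (w σ • σ.permMatrix ℝ) i (σ i) := h1.symm
    _ ≤ _ := by
        rw [Matrix.sum_apply]
        exact Finset.single_le_sum (f := fun τ => (w τ • τ.permMatrix ℝ) i (σ i))
          (fun τ _ => by
            have : (0:ℝ) ≤ (τ.permMatrix ℝ) i (σ i) := by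
              simp [Equiv.Perm.permMatrix, Equiv.toPEquiv_apply]
              positivity
            exact mul_nonneg (hw0 τ) this) (Finset.mem_univ σ)
  have : S i (σ i) = r * M i (σ i) := by
    simp [hM, Matrix.smul_apply, mul_inv_cancel_left₀ hr.ne']
  rw [this]
  positivity
end

section
/- If the Hamming distance between bitstrings a and b is h ≥ 1, then the transposition (a b) can be written as a product of 2h − 1 transpositions, each of which swaps two bitstrings at Hamming distance 1. -/
open Finset in
theorem transposition_as_hamming_one_swaps {n : ℕ} (a b : Fin n → Bool)
    (h : ℕ) (hh : hammingDist a b = h) (h1 : 1 ≤ h) :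
    ∃ l : List (Equiv.Perm (Fin n → Bool)),
      l.length = 2 * h - 1 ∧
      (∀ p ∈ l, ∃ x y : Fin n → Bool, hammingDist x y = 1 ∧ p = Equiv.swap x y) ∧
      l.prod = Equiv.swap a b := by
  induction h, h1 using Nat.le_induction generalizing a with
  | base =>
    exact ⟨[Equiv.swap a b], rfl, by
      rintro p hp
      simp at hp
      exact ⟨a, b, hh, hp⟩, by simp⟩
  | succ h hle ih =>
    -- pick a differing index
    have hab : a ≠ b := by
      intro he; rw [he, hammingDist_self] at hh; omega
    have hne : ∃ i, a i ≠ b i := by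
      by_contra hc
      push_neg at hc
      exact hab (funext hc)
    obtain ⟨i, hi⟩ := hne
    set c : Fin n → Bool := Function.update a i (b i) with hc
    have hac : hammingDist a c = 1 := by
      have : ({j | a j ≠ c j} : Finset (Fin n)) = {i} := by
        ext j
        simp only [Finset.mem_filter, Finset.mem_univ, true_and, Finset.mem_singleton,
          Set.mem_setOf_eq, mem_filter]
        constructor
        · intro hj
          by_contra hji
          exact hj (by simp [hc, Function.update_of_ne hji])
        · rintro rfl; simpa [hc] using hi
      simp [hammingDist, this]
    have hcb : hammingDist c b = h := by
      have hset : (Finset.univ.filter (fun j => c j ≠ b j))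
          = (Finset.univ.filter (fun j => a j ≠ b j)).erase i := by
        ext j
        by_cases hji : j = i <;> simp [hc, hji, Function.update_of_ne, hi]
      have hmemi : i ∈ Finset.univ.filter (fun j => a j ≠ b j) := by simp [hi]
      have := Finset.card_erase_of_mem hmemi
      simp only [hammingDist] at hh ⊢
      rw [hset, this, hh]
      omega
    obtain ⟨l, hlen, hmem, hprod⟩ := ih c hcb
    refine ⟨Equiv.swap a c :: l ++ [Equiv.swap a c], ?_, ?_, ?_⟩
    · simp [hlen]; omega
    · intro p hp
      simp only [List.mem_cons, List.mem_append, List.mem_singleton] at hp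
      rcases hp with (hp | hp) | (hp | hp)
      · exact ⟨a, c, hac, hp⟩
      · exact hmem p hp
      · exact ⟨a, c, hac, hp⟩
      · simp at hp
    · have hba : b ≠ a := hab.symm
      have hbc : b ≠ c := by
        intro he; rw [← he, hammingDist_self] at hcb; omega
      have hca : c ≠ a := by
        intro he; rw [he, hammingDist_self] at hac; omega
      have key : Equiv.swap a c * Equiv.swap c b * Equiv.swap a c = Equiv.swap a b := by
        have := Equiv.swap_apply_apply (Equiv.swap a c) c b
        rw [Equiv.swap_apply_right, Equiv.swap_apply_of_ne_of_ne hba hbc,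
          Equiv.swap_inv] at this
        exact this.symm
      simp only [List.prod_cons, List.prod_append, List.prod_singleton, List.prod_nil,
        mul_one, hprod]
      exact key
end
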